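/- Let p be a prime. The derived limit lim¹ of the inverse sequence (⋯ →·p→ ℤ →·p→ ℤ), i.e. the cokernel of the group homomorphism ∏_{i∈ℕ} ℤ → ∏_{i∈ℕ} ℤ given by (g₀,g₁,g₂,…) ↦ (g₀ − p·g₁, g₁ − p·g₂, g₂ − p·g₃, …), is isomorphic as an abelian group to ℤ_p/ℤ, the quotient of the additive group of p-adic integers by the subgroup of ordinary integers. -/

import Mathlib

open Finset

namespace Lim1Aux

variable (p : ℕ) [hp : Fact p.Prime]

/-- The tail sum `∑_{j} p^j g_{i+j}` in `ℤ_p`. -/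
noncomputable def S (g : ℕ → ℤ) (i : ℕ) : PadicInt p :=
  ∑' j : ℕ, (p : PadicInt p) ^ j * (g (i + j) : PadicInt p)

lemma p_inv_lt_one : ((p : ℝ))⁻¹ < 1 := by
  have : (1:ℝ) < p := by exact_mod_cast hp.out.one_lt
  rw [inv_lt_one_iff₀]; right; exact this

omit hp in lemma p_inv_nonneg : (0:ℝ) ≤ ((p : ℝ))⁻¹ := by positivity

lemma norm_term_le (z : PadicInt p) (j : ℕ) :
    ‖(p : PadicInt p) ^ j * z‖ ≤ ((p:ℝ)⁻¹) ^ j := by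
  rw [norm_mul, norm_pow, PadicInt.norm_p]
  calc ((p:ℝ)⁻¹) ^ j * ‖z‖ ≤ ((p:ℝ)⁻¹) ^ j * 1 :=
        mul_le_mul_of_nonneg_left (PadicInt.norm_le_one z) (pow_nonneg (p_inv_nonneg p) j)
    _ = ((p:ℝ)⁻¹) ^ j := mul_one _

lemma summ (g : ℕ → ℤ) (i : ℕ) :
    Summable (fun j : ℕ => (p : PadicInt p) ^ j * (g (i + j) : PadicInt p)) := by
  apply Summable.of_norm_bounded (g := fun j => ((p:ℝ)⁻¹) ^ j)
  · exact summable_geometric_of_lt_one (p_inv_nonneg p) (p_inv_lt_one p)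
  · intro j
    exact norm_term_le p _ j

lemma tail_eq (g : ℕ → ℤ) (i : ℕ) :
    S p g i = (g i : PadicInt p) + (p : PadicInt p) * S p g (i + 1) := by
  have h := Summable.tsum_eq_zero_add (summ p g i)
  rw [S, h]
  simp only [pow_zero, one_mul, Nat.add_zero]
  congr 1
  rw [S]
  calc ∑' (b : ℕ), (p : PadicInt p) ^ (b + 1) * (g (i + (b + 1)) : PadicInt p)
      = ∑' (b : ℕ), (p : PadicInt p) * ((p : PadicInt p) ^ b * (g ((i + 1) + b) : PadicInt p)) := by
        congr 1; funext b
        have : i + (b + 1) = (i + 1) + b := by omega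
        rw [this, pow_succ]; ring
    _ = (p : PadicInt p) * ∑' (j : ℕ), (p : PadicInt p) ^ j * (g ((i + 1) + j) : PadicInt p) :=
        (summ p g (i + 1)).tsum_mul_left _

lemma S_add (a b : ℕ → ℤ) (i : ℕ) : S p (a + b) i = S p a i + S p b i := by
  rw [S, S, S, ← Summable.tsum_add (summ p a i) (summ p b i)]
  congr 1; funext j
  push_cast [Pi.add_apply]
  ring

lemma exists_rep (g : ℕ → ℤ) (n : ℤ) (h0 : ((n : ℤ) : PadicInt p) = S p g 0) :
    ∀ i, ∃ m : ℤ, ((m : ℤ) : PadicInt p) = S p g i := by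
  intro i
  induction i with
  | zero => exact ⟨n, h0⟩
  | succ i ih =>
    obtain ⟨m, hm⟩ := ih
    have hdvd : (p : ℤ) ∣ m - g i := by
      rw [← PadicInt.norm_int_lt_one_iff_dvd]
      have hEq : ((m - g i : ℤ) : PadicInt p) = (p : PadicInt p) * S p g (i + 1) := by
        push_cast
        rw [hm, tail_eq]
        ring
      rw [hEq]
      calc ‖(p : PadicInt p) * S p g (i + 1)‖
          = ‖(p : PadicInt p)‖ * ‖S p g (i + 1)‖ := norm_mul _ _
        _ ≤ ‖(p : PadicInt p)‖ * 1 :=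
            mul_le_mul_of_nonneg_left (PadicInt.norm_le_one _) (norm_nonneg _)
        _ < 1 := by
            rw [mul_one, PadicInt.norm_p]
            exact p_inv_lt_one p
    obtain ⟨k, hk⟩ := hdvd
    refine ⟨k, ?_⟩
    have hpne : (p : PadicInt p) ≠ 0 := by
      exact_mod_cast hp.out.ne_zero
    apply mul_left_cancel₀ hpne
    have : ((m - g i : ℤ) : PadicInt p) = (p : PadicInt p) * (k : PadicInt p) := by
      rw [hk]; push_cast; ring
    rw [← this]
    push_cast
    rw [hm, tail_eq]
    ring

lemma mem_range_of_int (g : ℕ → ℤ) (n : ℤ) (h0 : ((n : ℤ) : PadicInt p) = S p g 0) :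
    ∃ h : ℕ → ℤ, (fun i => h i - (p : ℤ) * h (i + 1)) = g := by
  choose h hh using exists_rep p g n h0
  refine ⟨h, ?_⟩
  funext i
  have : ((h i - (p:ℤ) * h (i+1) : ℤ) : PadicInt p) = ((g i : ℤ) : PadicInt p) := by
    push_cast
    rw [hh i, hh (i+1), tail_eq]
    ring
  exact_mod_cast this

lemma surj (x : PadicInt p) : ∃ g : ℕ → ℤ, S p g 0 = x := by
  set a : ℕ → ℤ := fun i => (x.appr i : ℤ) with ha
  have hdvd : ∀ i : ℕ, (p:ℤ) ^ i ∣ a (i+1) - a i := by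
    intro i
    have := PadicInt.dvd_appr_sub_appr x i (i+1) (by omega)
    have hle : x.appr i ≤ x.appr (i+1) := x.appr_mono (by omega)
    have : ((p^i : ℕ) : ℤ) ∣ ((x.appr (i+1) - x.appr i : ℕ) : ℤ) := Int.natCast_dvd_natCast.2 this
    rwa [Nat.cast_sub hle, Nat.cast_pow] at this
  set g : ℕ → ℤ := fun i => (a (i+1) - a i) / (p:ℤ)^i with hg
  have key : ∀ i, (p:ℤ)^i * g i = a (i+1) - a i := fun i => Int.mul_ediv_cancel' (hdvd i)
  refine ⟨g, ?_⟩
  have hsum := summ p g 0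
  have htends := hsum.hasSum.tendsto_sum_nat
  have hpartial : ∀ n : ℕ, (∑ i ∈ range n, (p : PadicInt p) ^ i * (g (0 + i) : PadicInt p))
      = ((a n : ℤ) : PadicInt p) := by
    intro n
    have : (∑ i ∈ range n, ((p:ℤ) ^ i * g i : ℤ)) = a n - a 0 := by
      calc (∑ i ∈ range n, ((p:ℤ) ^ i * g i : ℤ)) = ∑ i ∈ range n, (a (i+1) - a i) := by
            exact Finset.sum_congr rfl fun i _ => key i
        _ = a n - a 0 := Finset.sum_range_sub a n
    have ha0 : a 0 = 0 := by simp [ha, PadicInt.appr]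
    have hz : (∑ i ∈ range n, ((p:ℤ) ^ i * g i : ℤ)) = a n := by rw [this, ha0, sub_zero]
    calc (∑ i ∈ range n, (p : PadicInt p) ^ i * (g (0 + i) : PadicInt p))
        = ((∑ i ∈ range n, ((p:ℤ) ^ i * g i : ℤ) : ℤ) : PadicInt p) := by
          push_cast; simp
      _ = ((a n : ℤ) : PadicInt p) := by rw [hz]
  -- partial sums tend to x
  have htendx : Filter.Tendsto (fun n => (∑ i ∈ range n,
      (p : PadicInt p) ^ i * (g (0 + i) : PadicInt p))) Filter.atTop (nhds x) := by
    simp only [hpartial]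
    rw [tendsto_iff_norm_sub_tendsto_zero]
    apply squeeze_zero (fun n => norm_nonneg _) (g := fun n => ((p:ℝ)⁻¹)^n)
    · intro n
      obtain ⟨c, hc⟩ := Ideal.mem_span_singleton'.1 (PadicInt.appr_spec n x)
      have : ((a n : ℤ) : PadicInt p) - x = -((p : PadicInt p)^n * c) := by
        simp only [ha]
        push_cast
        rw [mul_comm ((p : PadicInt p) ^ n) c, hc]; ring
      rw [this, norm_neg]
      exact norm_term_le p c n
    · exact tendsto_pow_atTop_nhds_zero_of_lt_one (p_inv_nonneg p) (p_inv_lt_one p)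
  exact tendsto_nhds_unique htends htendx

lemma S_boundary (h : ℕ → ℤ) :
    S p (fun i => h i - (p : ℤ) * h (i + 1)) 0 = ((h 0 : ℤ) : PadicInt p) := by
  set f : ℕ → PadicInt p := fun j => (p : PadicInt p) ^ j * (h j : PadicInt p) with hf
  have hfs : Summable f := by simpa using summ p h 0
  have hfs' : Summable (fun j => f (j + 1)) := (summable_nat_add_iff 1).2 hfs
  have h1 : S p (fun i => h i - (p : ℤ) * h (i + 1)) 0
      = ∑' j : ℕ, (f j - f (j + 1)) := by
    rw [S]
    congr 1; funext j
    simp only [hf, Nat.zero_add]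
    push_cast
    rw [pow_succ]
    ring
  rw [h1, Summable.tsum_sub hfs hfs']
  have h2 := Summable.tsum_eq_zero_add hfs
  rw [h2]
  simp [hf]

end Lim1Aux

/-- The derived limit `lim¹` of the inverse sequence `⋯ →·p→ ℤ →·p→ ℤ`, i.e. the
cokernel of `(g₀,g₁,g₂,…) ↦ (g₀ − p·g₁, g₁ − p·g₂, …)` on `∏ᵢ ℤ`, is isomorphic
to `ℤ_p/ℤ`, the p-adic integers modulo the ordinary integers. -/
theorem lim1_padic (p : ℕ) [Fact p.Prime] :
    Nonempty
      (((ℕ → ℤ) ⧸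
          (AddMonoidHom.mk' (fun g : ℕ → ℤ => fun i => g i - (p : ℤ) * g (i + 1))
            (by intro a b; funext i; simp [Pi.add_apply]; ring)).range) ≃+
        (PadicInt p ⧸ ((Int.castRingHom (PadicInt p)).toAddMonoidHom.range))) := by
  classical
  set D : (ℕ → ℤ) →+ (ℕ → ℤ) :=
    AddMonoidHom.mk' (fun g : ℕ → ℤ => fun i => g i - (p : ℤ) * g (i + 1))
      (by intro a b; funext i; simp [Pi.add_apply]; ring) with hD
  set R : AddSubgroup (PadicInt p) := (Int.castRingHom (PadicInt p)).toAddMonoidHom.range with hR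
  set Φ : (ℕ → ℤ) →+ PadicInt p :=
    AddMonoidHom.mk' (fun g => Lim1Aux.S p g 0) (fun a b => Lim1Aux.S_add p a b 0) with hΦ
  set ψ : (ℕ → ℤ) →+ (PadicInt p ⧸ R) := (QuotientAddGroup.mk' R).comp Φ with hψ
  have hker : D.range ≤ ψ.ker := by
    rintro g ⟨h, rfl⟩
    rw [AddMonoidHom.mem_ker, hψ]
    simp only [AddMonoidHom.comp_apply, hΦ, AddMonoidHom.mk'_apply]
    have : Lim1Aux.S p (D h) 0 = ((h 0 : ℤ) : PadicInt p) := Lim1Aux.S_boundary p h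
    rw [this]
    rw [QuotientAddGroup.mk'_apply, QuotientAddGroup.eq_zero_iff]
    exact ⟨h 0, rfl⟩
  set f : ((ℕ → ℤ) ⧸ D.range) →+ (PadicInt p ⧸ R) :=
    QuotientAddGroup.lift D.range ψ hker with hfdef
  have hsurj : Function.Surjective f := by
    intro y
    obtain ⟨x, rfl⟩ := QuotientAddGroup.mk'_surjective R y
    obtain ⟨g, hg⟩ := Lim1Aux.surj p x
    exact ⟨QuotientAddGroup.mk g, by
      simp only [hfdef, QuotientAddGroup.lift_mk', hψ, AddMonoidHom.comp_apply, hΦ,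
        AddMonoidHom.mk'_apply, hg]⟩
  have hinj : Function.Injective f := by
    rw [injective_iff_map_eq_zero]
    intro q hq
    obtain ⟨g, rfl⟩ := QuotientAddGroup.mk_surjective q
    have hψg : ψ g = 0 := by
      simpa only [hfdef, QuotientAddGroup.lift_mk'] using hq
    have : Φ g ∈ R := by
      rw [hψ, AddMonoidHom.comp_apply, QuotientAddGroup.mk'_apply,
        QuotientAddGroup.eq_zero_iff] at hψg
      exact hψg
    obtain ⟨n, hn⟩ := this
    have hn' : ((n : ℤ) : PadicInt p) = Lim1Aux.S p g 0 := by
      simpa [hΦ] using hn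
    obtain ⟨h, hh⟩ := Lim1Aux.mem_range_of_int p g n hn'
    have : g ∈ D.range := ⟨h, by simpa [hD] using hh⟩
    rw [QuotientAddGroup.eq_zero_iff]
    exact this
  exact ⟨AddEquiv.ofBijective f ⟨hinj, hsurj⟩⟩
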